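/- Let A be an NBW over an alphabet Σ with classical congruence ∼. For all u, v ∈ Σ*, if the ω-language [u]_∼[v]_∼^ω is proper, then either [u]_∼[v]_∼^ω ∩ L(A) = ∅ or [u]_∼[v]_∼^ω ⊆ L(A). -/
import Mathlib


open scoped Classical

/-- A nondeterministic Büchi automaton over alphabet `α` with state type `Q`. -/
structure NBW (α : Type) (Q : Type) where
  I : Set Q
  δ : Q → α → Set Q
  F : Set Q

namespace NBW

variable {α Q : Type}

/-- One-step successor set: `δ(S, a) = ⋃_{q ∈ S} δ(q, a)`. -/
def δStep (A : NBW α Q) (S : Set Q) (a : α) : Set Q := ⋃ q ∈ S, A.δ q a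

/-- Extension of `δ` to finite words: `δ(S, ε) = S`, `δ(S, ua) = δ(δ(S, u), a)`. -/
def δSet (A : NBW α Q) (S : Set Q) (u : List α) : Set Q := u.foldl A.δStep S

/-- `A.Reach q u r` means `q →ᵘ r`: there is a run of `A` over `u` from `q` to `r`. -/
def Reach (A : NBW α Q) : Q → List α → Q → Prop
  | q, [], r => q = r
  | q, a :: u, r => ∃ p ∈ A.δ q a, A.Reach p u r

/-- `A.FReach q u r` means `q ⇒ᵘ r`: there is a run of `A` over `u` from `q` to `r`
visiting some accepting state. -/
def FReach (A : NBW α Q) : Q → List α → Q → Prop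
  | q, [], r => q = r ∧ q ∈ A.F
  | q, a :: u, r =>
      (q ∈ A.F ∧ ∃ p ∈ A.δ q a, A.Reach p u r) ∨ ∃ p ∈ A.δ q a, A.FReach p u r

/-- The classical congruence `∼`:  `u₁ ∼ u₂` iff for all states `q, r`,
`q →^{u₁} r ↔ q →^{u₂} r` and `q ⇒^{u₁} r ↔ q ⇒^{u₂} r`. -/
def canoEq (A : NBW α Q) (u₁ u₂ : List α) : Prop :=
  ∀ q r : Q, (A.Reach q u₁ r ↔ A.Reach q u₂ r) ∧ (A.FReach q u₁ r ↔ A.FReach q u₂ r)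

/-- The `∼`-equivalence class of `u`. -/
def canoClass (A : NBW α Q) (u : List α) : Set (List α) := {x | A.canoEq u x}

/-- The right congruence `∼ⁱ`: `u₁ ∼ⁱ u₂` iff `δ(I, u₁) = δ(I, u₂)`. -/
def iEq (A : NBW α Q) (u₁ u₂ : List α) : Prop := A.δSet A.I u₁ = A.δSet A.I u₂

/-- The `∼ⁱ`-equivalence class of `u`. -/
def iClass (A : NBW α Q) (u : List α) : Set (List α) := {x | A.iEq u x}

/-- The relation `≈ᵤ`: `v₁ ≈ᵤ v₂` iff for all `q ∈ δ(I, u)` and all states `r`,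
`q →^{v₁} r ↔ q →^{v₂} r` and `q ⇒^{v₁} r ↔ q ⇒^{v₂} r`. -/
def proEq (A : NBW α Q) (u v₁ v₂ : List α) : Prop :=
  ∀ q ∈ A.δSet A.I u, ∀ r : Q,
    (A.Reach q v₁ r ↔ A.Reach q v₂ r) ∧ (A.FReach q v₁ r ↔ A.FReach q v₂ r)

/-- The `≈ᵤ`-equivalence class of `v`. -/
def proClass (A : NBW α Q) (u v : List α) : Set (List α) := {x | A.proEq u v x}

/-- Büchi acceptance of an ω-word `w : ℕ → α`. -/
def AcceptsOmega (A : NBW α Q) (w : ℕ → α) : Prop :=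
  ∃ ρ : ℕ → Q, ρ 0 ∈ A.I ∧ (∀ i, ρ (i + 1) ∈ A.δ (ρ i) (w i)) ∧
    ∀ n, ∃ i, n ≤ i ∧ ρ i ∈ A.F

/-- The ω-language of `A`. -/
def L (A : NBW α Q) : Set (ℕ → α) := {w | A.AcceptsOmega w}

end NBW

/-- Elementwise concatenation of two languages of finite words. -/
def Lang.concat {α : Type} (X Y : Set (List α)) : Set (List α) :=
  {z | ∃ x ∈ X, ∃ y ∈ Y, z = x ++ y}

/-- `OmegaLang U V` is the set of ω-words of the form `u₀ v₁ v₂ ⋯` with `u₀ ∈ U`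
and each `vᵢ` a nonempty word in `V`: every finite prefix `u₀ v₁ ⋯ v_k` is a
prefix of `w`. -/
def OmegaLang {α : Type} (U V : Set (List α)) : Set (ℕ → α) :=
  {w | ∃ u₀ ∈ U, ∃ vs : ℕ → List α,
    (∀ i, vs i ≠ [] ∧ vs i ∈ V) ∧
    ∀ k : ℕ,
      u₀ ++ ((List.range k).map vs).flatten =
        List.ofFn fun i : Fin (u₀ ++ ((List.range k).map vs).flatten).length => w i.1}

/-- The ω-language `[u]_∼ [v]_∼^ω` is proper if `[u][v] ⊆ [u]` and `[v][v] ⊆ [v]`. -/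
def IsProper {α Q : Type} (A : NBW α Q) (u v : List α) : Prop :=
  Lang.concat (A.canoClass u) (A.canoClass v) ⊆ A.canoClass u ∧
  Lang.concat (A.canoClass v) (A.canoClass v) ⊆ A.canoClass v

namespace ProperSat
variable {α Q : Type}

/-- Segment of an ω-word: letters at positions `m, m+1, …, m+L-1`. -/
def seg (w : ℕ → α) (m L : ℕ) : List α := List.ofFn fun i : Fin L => w (m + i)

@[simp] lemma seg_length (w : ℕ → α) (m L : ℕ) : (seg w m L).length = L := by
  simp [seg]

lemma seg_zero (w : ℕ → α) (L : ℕ) :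
    seg w 0 L = List.ofFn fun i : Fin L => w i.1 := by
  simp [seg]

lemma seg_succ (w : ℕ → α) (m L : ℕ) :
    seg w m (L + 1) = w m :: seg w (m + 1) L := by
  rw [seg, List.ofFn_succ]
  congr 1
  rw [seg]; congr 1; funext i; congr 1; simp [Fin.val_succ]; omega

lemma seg_append (w : ℕ → α) (m a b : ℕ) :
    seg w m (a + b) = seg w m a ++ seg w (m + a) b := by
  rw [seg, List.ofFn_add]
  congr 1
  rw [seg]; congr 1; funext i; congr 1; simp [Fin.natAdd]; omega

lemma seg_getElem (w : ℕ → α) (m L i : ℕ) (hi : i < (seg w m L).length) :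
    (seg w m L)[i] = w (m + i) := by
  simp [seg] at hi ⊢

lemma reach_of_run (A : NBW α Q) {w : ℕ → α} {ρ : ℕ → Q}
    (hρ : ∀ i, ρ (i + 1) ∈ A.δ (ρ i) (w i)) :
    ∀ (L m : ℕ), A.Reach (ρ m) (seg w m L) (ρ (m + L)) := by
  intro L
  induction L with
  | zero => intro m; show A.Reach (ρ m) (seg w m 0) (ρ m); simp [seg]; rfl
  | succ L ih =>
    intro m
    rw [seg_succ]
    refine ⟨ρ (m + 1), hρ m, ?_⟩
    have := ih (m + 1)
    have he : m + 1 + L = m + (L + 1) := by omega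
    rwa [he] at this

lemma freach_of_run (A : NBW α Q) {w : ℕ → α} {ρ : ℕ → Q}
    (hρ : ∀ i, ρ (i + 1) ∈ A.δ (ρ i) (w i)) :
    ∀ (L m j : ℕ), m ≤ j → j ≤ m + L → ρ j ∈ A.F →
      A.FReach (ρ m) (seg w m L) (ρ (m + L)) := by
  intro L
  induction L with
  | zero =>
    intro m j h1 h2 hF
    have : j = m := by omega
    subst this
    show A.FReach (ρ j) (seg w j 0) (ρ j)
    simp [seg]; exact ⟨rfl, hF⟩
  | succ L ih =>
    intro m j h1 h2 hF
    rw [seg_succ]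
    have he : m + 1 + L = m + (L + 1) := by omega
    rcases Nat.eq_or_lt_of_le h1 with h | h
    · subst h
      left
      refine ⟨hF, ρ (m + 1), hρ m, ?_⟩
      have := reach_of_run A hρ L (m + 1)
      rwa [he] at this
    · right
      refine ⟨ρ (m + 1), hρ m, ?_⟩
      have := ih (m + 1) j h (by omega) hF
      rwa [he] at this

lemma exists_run_of_reach (A : NBW α Q) :
    ∀ (x : List α) (q r : Q), A.Reach q x r →
      ∃ f : ℕ → Q, f 0 = q ∧ f x.length = r ∧
        ∀ i (hi : i < x.length), f (i + 1) ∈ A.δ (f i) x[i] := by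
  intro x
  induction x with
  | nil =>
    intro q r hqr
    exact ⟨fun _ => q, rfl, hqr, fun i hi => absurd hi (by simp)⟩
  | cons a u ih =>
    intro q r hqr
    obtain ⟨p, hp, hpr⟩ := hqr
    obtain ⟨f, hf0, hfN, hfs⟩ := ih p r hpr
    refine ⟨fun i => match i with | 0 => q | i + 1 => f i, rfl, hfN, ?_⟩
    intro i hi
    match i with
    | 0 => simpa [hf0] using hp
    | i + 1 =>
      have := hfs i (by simpa using hi)
      simpa using this

lemma exists_run_of_freach (A : NBW α Q) :
    ∀ (x : List α) (q r : Q), A.FReach q x r →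
      ∃ f : ℕ → Q, f 0 = q ∧ f x.length = r ∧
        (∀ i (hi : i < x.length), f (i + 1) ∈ A.δ (f i) x[i]) ∧
        ∃ j ≤ x.length, f j ∈ A.F := by
  intro x
  induction x with
  | nil =>
    intro q r hqr
    obtain ⟨rfl, hF⟩ := hqr
    exact ⟨fun _ => q, rfl, rfl, fun i hi => absurd hi (by simp), 0, by omega, hF⟩
  | cons a u ih =>
    intro q r hqr
    rcases hqr with ⟨hF, p, hp, hpr⟩ | ⟨p, hp, hpr⟩
    · obtain ⟨f, hf0, hfN, hfs⟩ := exists_run_of_reach A u p r hpr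
      refine ⟨fun i => match i with | 0 => q | i + 1 => f i, rfl, hfN, ?_, 0, by omega, hF⟩
      intro i hi
      match i with
      | 0 => simpa [hf0] using hp
      | i + 1 => simpa using hfs i (by simpa using hi)
    · obtain ⟨f, hf0, hfN, hfs, j, hj, hjF⟩ := ih p r hpr
      refine ⟨fun i => match i with | 0 => q | i + 1 => f i, rfl, hfN, ?_, j + 1, by simpa using hj, hjF⟩
      intro i hi
      match i with
      | 0 => simpa [hf0] using hp
      | i + 1 => simpa using hfs i (by simpa using hi)

variable {α Q : Type}

lemma accepts_of_witness (A : NBW α Q) (u v : List α) {q0 q : Q}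
    (hq0 : q0 ∈ A.I) (hru : A.Reach q0 u q) (hfv : A.FReach q v q) :
    ∀ w ∈ OmegaLang (A.canoClass u) (A.canoClass v), w ∈ A.L := by
  rintro w ⟨u₀, hu₀, vs, hvs, hpre⟩
  set W : ℕ → List α := fun k => u₀ ++ ((List.range k).map vs).flatten with hWdef
  set B : ℕ → List α := fun k => match k with | 0 => u₀ | k + 1 => vs k with hBdef
  set S : ℕ → ℕ := fun k => match k with | 0 => 0 | k + 1 => (W k).length with hSdef
  have hW0 : W 0 = u₀ := by simp [hWdef]
  have hWsucc : ∀ k, W (k + 1) = W k ++ vs k := by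
    intro k; simp [hWdef, List.range_succ]
  have hSsucc : ∀ k, S (k + 1) = S k + (B k).length := by
    intro k
    match k with
    | 0 => simp [hSdef, hBdef, hW0]
    | k + 1 => simp [hSdef, hBdef, hWsucc k]
  have hSmono : Monotone S := monotone_nat_of_le_succ (fun k => by rw [hSsucc k]; omega)
  have hBpos : ∀ k, 0 < (B (k + 1)).length := by
    intro k
    simp only [hBdef]
    exact List.length_pos_iff.mpr (hvs k).1
  have hSk : ∀ k, k ≤ S (k + 1) := by
    intro k
    induction k with
    | zero => omega
    | succ k ih => have := hSsucc (k + 1); have := hBpos k; omega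
  have hseg0 : ∀ k, W k = seg w 0 (S (k + 1)) := by
    intro k
    have : S (k + 1) = (W k).length := rfl
    rw [this, seg_zero]
    exact hpre k
  have hB : ∀ k, B k = seg w (S k) ((B k).length) := by
    intro k
    match k with
    | 0 =>
      have h1 := hseg0 0
      rw [hW0] at h1
      have h2 : S 1 = (B 0).length := by have := hSsucc 0; simp [hSdef] at this ⊢; omega
      show u₀ = seg w (S 0) ((B 0).length)
      rw [show S 0 = 0 from rfl, ← h2]
      exact h1
    | k + 1 =>
      have h1 := hseg0 (k + 1)
      rw [hWsucc k] at h1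
      have h2 : S (k + 1 + 1) = S (k + 1) + (vs k).length := by
        have := hSsucc (k + 1); simpa [hBdef] using this
      rw [h2, seg_append, Nat.zero_add, ← hseg0 k] at h1
      have := List.append_cancel_left h1
      simpa [hBdef] using this
  have hletters : ∀ k i (hi : i < (B k).length), (B k)[i] = w (S k + i) := by
    intro k i hi
    rw [List.getElem_of_eq (hB k) hi, seg_getElem]
  -- block runs
  have hru0 : A.Reach q0 u₀ q := ((hu₀ q0 q).1).mp hru
  have hg : ∀ k, ∃ f : ℕ → Q, f 0 = (if k = 0 then q0 else q) ∧ f ((B k).length) = q ∧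
      (∀ i (hi : i < (B k).length), f (i + 1) ∈ A.δ (f i) ((B k)[i])) ∧
      (k ≠ 0 → ∃ j ≤ (B k).length, f j ∈ A.F) := by
    intro k
    match k with
    | 0 =>
      obtain ⟨f, h1, h2, h3⟩ := exists_run_of_reach A (B 0) q0 q (by simpa [hBdef] using hru0)
      exact ⟨f, by simpa using h1, h2, h3, by simp⟩
    | k + 1 =>
      have hfvk : A.FReach q (vs k) q := (((hvs k).2 q q).2).mp hfv
      obtain ⟨f, h1, h2, h3, h4⟩ := exists_run_of_freach A (B (k+1)) q q (by simpa [hBdef] using hfvk)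
      exact ⟨f, by simpa using h1, h2, h3, fun _ => h4⟩
  choose g hg0 hgN hgstep hgF using hg
  -- block index
  have hex : ∀ n, ∃ k, n < S (k + 1) := fun n =>
    ⟨n + 1, lt_of_lt_of_le (Nat.lt_succ_self n) (hSk (n + 1))⟩
  set blk : ℕ → ℕ := fun n => Nat.find (hex n) with hblkdef
  have hblk1 : ∀ n, n < S (blk n + 1) := fun n => Nat.find_spec (hex n)
  have hblk2 : ∀ n, S (blk n) ≤ n := by
    intro n
    rcases Nat.eq_zero_or_pos (blk n) with h | h
    · rw [h]; show S 0 ≤ n; simp [hSdef]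
    · have := Nat.find_min (hex n) (show blk n - 1 < blk n by omega)
      have heq : blk n - 1 + 1 = blk n := by omega
      rw [heq] at this
      omega
  have hblk_eq : ∀ n k, S k ≤ n → n < S (k + 1) → blk n = k := by
    intro n k h1 h2
    have hle : blk n ≤ k := Nat.find_le h2
    by_contra hne
    have hlt : blk n < k := by omega
    have : S (blk n + 1) ≤ S k := hSmono hlt
    have := hblk1 n
    omega
  set ρ : ℕ → Q := fun n => g (blk n) (n - S (blk n)) with hρdef
  refine ⟨ρ, ?_, ?_, ?_⟩
  · -- initial
    have h0 : S (blk 0) = 0 := by have := hblk2 0; omega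
    show g (blk 0) (0 - S (blk 0)) ∈ A.I
    rw [show (0:ℕ) - S (blk 0) = 0 by omega]
    rcases Nat.eq_zero_or_pos (blk 0) with h | h
    · rw [h]
      have hh := hg0 0
      rw [if_pos rfl] at hh
      rw [hh]; exact hq0
    · have hq0q : q0 = q := by
        have hS1 : S 1 ≤ S (blk 0) := hSmono h
        rw [h0] at hS1
        have hu₀len : u₀.length = 0 := by
          have : S 1 = (B 0).length := by have := hSsucc 0; simp [hSdef] at this ⊢; omega
          simp [hBdef] at this; omega
        have hu₀nil : u₀ = [] := List.length_eq_zero_iff.mp hu₀len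
        rw [hu₀nil] at hru0
        exact hru0
      have hh : g (blk 0) 0 = q := by
        have := hg0 (blk 0)
        rwa [if_neg (by omega)] at this
      rw [hh, ← hq0q]
      exact hq0
  · -- transitions
    intro n
    set k := blk n with hk
    have h1 : S k ≤ n := hblk2 n
    have h2 : n < S (k + 1) := hblk1 n
    have hjlt : n - S k < (B k).length := by have := hSsucc k; omega
    have hstep := hgstep k (n - S k) hjlt
    rw [hletters k (n - S k) hjlt, show S k + (n - S k) = n by omega] at hstep
    have hρn : ρ n = g k (n - S k) := rfl
    by_cases hc : n + 1 < S (k + 1)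
    · have hbk : blk (n + 1) = k := hblk_eq (n + 1) k (by omega) hc
      show g (blk (n+1)) (n + 1 - S (blk (n+1))) ∈ A.δ (ρ n) (w n)
      rw [hbk, show n + 1 - S k = (n - S k) + 1 by omega, hρn]
      exact hstep
    · have he : n + 1 = S (k + 1) := by omega
      have hlt2 : n + 1 < S (k + 1 + 1) := by
        have := hSsucc (k + 1); have := hBpos k; omega
      have hbk : blk (n + 1) = k + 1 := hblk_eq (n + 1) (k + 1) (by omega) hlt2
      have hend : n - S k + 1 = (B k).length := by have := hSsucc k; omega
      show g (blk (n+1)) (n + 1 - S (blk (n+1))) ∈ A.δ (ρ n) (w n)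
      rw [hbk, show n + 1 - S (k + 1) = 0 by omega]
      have e1 : g (k + 1) 0 = q := by have := hg0 (k + 1); rwa [if_neg (by omega)] at this
      have e2 : g k ((n - S k) + 1) = q := by rw [hend]; exact hgN k
      rw [e1, ← e2, hρn]
      exact hstep
  · -- infinitely many accepting
    intro n
    obtain ⟨j, hj, hjF⟩ := hgF (n + 1) (Nat.succ_ne_zero n)
    refine ⟨S (n + 1) + j, by have := hSk n; omega, ?_⟩
    set k := n + 1 with hk
    by_cases hc : j < (B k).length
    · have hbk : blk (S k + j) = k := hblk_eq _ _ (by omega) (by have := hSsucc k; omega)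
      show g (blk (S k + j)) (S k + j - S (blk (S k + j))) ∈ A.F
      rw [hbk, show S k + j - S k = j by omega]
      exact hjF
    · have hje : j = (B k).length := by omega
      have he : S k + j = S (k + 1) := by have := hSsucc k; omega
      have hbk : blk (S k + j) = k + 1 := by
        apply hblk_eq _ _ (by omega)
        have := hSsucc (k + 1); have := hBpos k; omega
      show g (blk (S k + j)) (S k + j - S (blk (S k + j))) ∈ A.F
      rw [hbk, show S k + j - S (k + 1) = 0 by omega]
      have e1 : g (k + 1) 0 = q := by have := hg0 (k + 1); rwa [if_neg (by omega)] at this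
      have e2 : g k j = q := by rw [hje]; exact hgN k
      rw [e1, ← e2]
      exact hjF


lemma exists_witness [Fintype Q] (A : NBW α Q) (u v : List α) (h : IsProper A u v)
    {w : ℕ → α} (hw : w ∈ OmegaLang (A.canoClass u) (A.canoClass v)) (hacc : w ∈ A.L) :
    ∃ q0 ∈ A.I, ∃ q : Q, A.Reach q0 u q ∧ A.FReach q v q := by
  obtain ⟨u₀, hu₀, vs, hvs, hpre⟩ := hw
  obtain ⟨ρ, hI, hstep, hF⟩ := hacc
  set W : ℕ → List α := fun k => u₀ ++ ((List.range k).map vs).flatten with hWdef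
  set S : ℕ → ℕ := fun k => match k with | 0 => 0 | k + 1 => (W k).length with hSdef
  have hW0 : W 0 = u₀ := by simp [hWdef]
  have hWsucc : ∀ k, W (k + 1) = W k ++ vs k := by
    intro k; simp [hWdef, List.range_succ]
  have hS1 : S 1 = u₀.length := by simp [hSdef, hW0]
  have hSstep : ∀ k, S (k + 1 + 1) = S (k + 1) + (vs k).length := by
    intro k
    show (W (k+1)).length = (W k).length + (vs k).length
    rw [hWsucc k]; simp
  have hSmono : Monotone S := by
    apply monotone_nat_of_le_succ
    intro k
    match k with
    | 0 => show 0 ≤ S 1; omega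
    | k + 1 => have := hSstep k; omega
  have hSk : ∀ k, k ≤ S (k + 1) := by
    intro k
    induction k with
    | zero => omega
    | succ k ih =>
      have := hSstep k
      have : 0 < (vs k).length := List.length_pos_iff.mpr (hvs k).1
      omega
  have hseg0 : ∀ k, W k = seg w 0 (S (k + 1)) := by
    intro k
    have : S (k + 1) = (W k).length := rfl
    rw [this, seg_zero]
    exact hpre k
  -- W k is in the class of u
  have hWu : ∀ k, W k ∈ A.canoClass u := by
    intro k
    induction k with
    | zero => rw [hW0]; exact hu₀
    | succ k ih => exact h.1 ⟨W k, ih, vs k, (hvs k).2, hWsucc k⟩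
  -- tails are in the class of v
  have hT : ∀ k m, ∃ t ∈ A.canoClass v, W (k + m + 1) = W k ++ t := by
    intro k m
    induction m with
    | zero => exact ⟨vs k, (hvs k).2, hWsucc k⟩
    | succ m ih =>
      obtain ⟨t, ht, hWt⟩ := ih
      refine ⟨t ++ vs (k + m + 1), h.2 ⟨t, ht, vs (k + m + 1), (hvs (k + m + 1)).2, rfl⟩, ?_⟩
      rw [show k + (m + 1) + 1 = (k + m + 1) + 1 by omega, hWsucc (k + m + 1), hWt,
        List.append_assoc]
  -- pigeonhole
  obtain ⟨q, hqinf⟩ := Finite.exists_infinite_fiber (fun k => ρ (S (k + 1)))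
  rw [Set.infinite_coe_iff] at hqinf
  obtain ⟨k, hk⟩ := hqinf.nonempty
  have hkq : ρ (S (k + 1)) = q := hk
  obtain ⟨i, hi, hiF⟩ := hF (S (k + 1))
  obtain ⟨l, hl, hkl⟩ := hqinf.exists_gt (k + i)
  have hlq : ρ (S (l + 1)) = q := hl
  have hkl' : k < l := by omega
  have hil : i ≤ S (l + 1) := le_trans (show i ≤ l by omega) (hSk l)
  -- the reach part
  have h1 : A.Reach (ρ 0) (seg w 0 (S (k + 1))) (ρ (S (k + 1))) := by
    have := reach_of_run A hstep (S (k + 1)) 0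
    simpa using this
  rw [← hseg0 k, hkq] at h1
  have hreach_u : A.Reach (ρ 0) u q := ((hWu k) (ρ 0) q).1.mpr h1
  -- the freach part
  obtain ⟨t, htv, hWl⟩ := hT k (l - k - 1)
  have hlk : k + (l - k - 1) + 1 = l := by omega
  rw [hlk] at hWl
  have hle : S (k + 1) ≤ S (l + 1) := hSmono (show k+1 ≤ l+1 by omega)
  set Δ := S (l + 1) - S (k + 1) with hΔdef
  have hΔ : S (k + 1) + Δ = S (l + 1) := by omega
  have hteq : t = seg w (S (k + 1)) Δ := by
    have e1 := hseg0 l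
    rw [hWl, ← hΔ, seg_append, Nat.zero_add, ← hseg0 k] at e1
    exact List.append_cancel_left e1
  have h2 : A.FReach (ρ (S (k + 1))) (seg w (S (k + 1)) Δ) (ρ (S (k + 1) + Δ)) :=
    freach_of_run A hstep Δ (S (k + 1)) i hi (by omega) hiF
  rw [hΔ, hkq, hlq, ← hteq] at h2
  have hfv : A.FReach q v q := ((htv q q).2).mpr h2
  exact ⟨ρ 0, hI, q, hreach_u, hfv⟩

end ProperSat

/-- if `[u]_∼[v]_∼^ω` is proper, then it is either disjoint from
`L(A)` or contained in `L(A)`. -/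
theorem proper_saturation {α Q : Type} [Fintype Q] (A : NBW α Q) (u v : List α)
    (h : IsProper A u v) :
    OmegaLang (A.canoClass u) (A.canoClass v) ∩ A.L = ∅ ∨
      OmegaLang (A.canoClass u) (A.canoClass v) ⊆ A.L := by
  rcases Set.eq_empty_or_nonempty (OmegaLang (A.canoClass u) (A.canoClass v) ∩ A.L)
    with he | ⟨w', hw'⟩
  · exact Or.inl he
  · right
    obtain ⟨q0, hq0, q, hru, hfv⟩ := ProperSat.exists_witness A u v h hw'.1 hw'.2
    exact fun w hw => ProperSat.accepts_of_witness A u v hq0 hru hfv w hw
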